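/- Let k and n be positive integers and c : ω^n → k a coloring. Then there is a subset X ⊆ ω^n homeomorphic to ω^n (subspace topology) such that c is constant on X^(i) \ X^(i+1) for each i < n. -/

import Mathlib

open Set Ordinal
open scoped Cardinal

universe u

/-- Natural (Hessenberg) addition of ordinals, as in the older Mathlib (`Ordinal.nadd`). -/
noncomputable def Ordinal.nadd (a b : Ordinal.{u}) : Ordinal.{u} :=
  max (⨆ x : Iio a, Order.succ (Ordinal.nadd x.1 b)) (⨆ x : Iio b, Order.succ (Ordinal.nadd a x.1))
termination_by (a, b)
decreasing_by
  · exact Prod.Lex.left _ _ x.2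
  · exact Prod.Lex.right _ x.2

infixl:65 " ♯ " => Ordinal.nadd

noncomputable section

/-- Derived set (non-isolated points) of a set of ordinals, as a subspace. -/
def deriv' (s : Set Ordinal.{0}) : Set Ordinal.{0} := {x ∈ s | x ∈ closure (s \ {x})}

/-- Iterated Cantor–Bendixson derivative. -/
def iterDeriv (s : Set Ordinal.{0}) (o : Ordinal.{0}) : Set Ordinal.{0} :=
  Ordinal.limitRecOn o s (fun _ ih => deriv' ih) (fun o _ ih => ⋂ (p : Ordinal.{0}) (h : p < o), ih p h)

/-- `s` contains a homeomorphic copy of the ordinal `α` (with its order topology). -/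
def HomeoCopy (α : Ordinal.{0}) (s : Set Ordinal.{0}) : Prop :=
  ∃ t : Set Ordinal, t ⊆ s ∧ Nonempty ((Iio α : Set Ordinal.{0}) ≃ₜ t)

/-- Two ordinals are biembeddable: each is homeomorphic to a subspace of the other. -/
def Biembed (α β : Ordinal.{0}) : Prop := HomeoCopy α (Iio β) ∧ HomeoCopy β (Iio α)

/-- Two sets of ordinals are order-homeomorphic: there is an order-preserving homeomorphism. -/
def OrderHomeo (X Y : Set Ordinal.{0}) : Prop :=
  ∃ e : X ≃ₜ Y, ∀ a b : X, a ≤ b ↔ e a ≤ e b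

/-- An ordinal is order-reinforcing. -/
def OrderReinforcing (α : Ordinal.{0}) : Prop :=
  ∀ X : Set Ordinal, Nonempty ((Iio α : Set Ordinal.{0}) ≃ₜ X) → ∃ Y ⊆ X, OrderHomeo (Iio α) Y

/-- The Cantor–Bendixson rank of an ordinal: the least exponent in its Cantor normal form. -/
def CB (x : Ordinal.{0}) : Ordinal := if x = 0 then 0 else sSup {γ | (ω : Ordinal.{0}) ^ γ ∣ x}

/-- The natural (Hessenberg) sum of a finite family of ordinals. -/
def natSumFam {k : ℕ} (α : Fin k → Ordinal.{0}) : Ordinal := (List.ofFn α).foldr (· ♯ ·) 0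

/-- The Milner–Rado sum of a finite family of ordinals. -/
def mrSumFam {k : ℕ} (α : Fin k → Ordinal.{0}) : Ordinal :=
  sInf {δ | ∀ β : Fin k → Ordinal, (∀ i, β i < α i) → δ ≠ natSumFam β}

/-- The topological pigeonhole relation `β → (top α i)¹` for finitely many colours. -/
def TopPH {k : ℕ} (β : Ordinal.{0}) (α : Fin k → Ordinal.{0}) : Prop :=
  ∀ c : Ordinal → Fin k, ∃ i, HomeoCopy (α i) (Iio β ∩ c ⁻¹' {i})

/-- The topological pigeonhole relation with an arbitrary index type of colours. -/
def TopPHFam {ι : Type*} (β : Ordinal.{0}) (α : ι → Ordinal.{0}) : Prop :=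
  ∀ c : Ordinal → ι, ∃ i, HomeoCopy (α i) (Iio β ∩ c ⁻¹' {i})

/-- `ω̄[γ, m]`: `ω ^ γ * m + 1` if `γ > 0`, and `m` if `γ = 0`. -/
def obar (γ : Ordinal.{0}) (m : ℕ) : Ordinal := if γ = 0 then (m : Ordinal.{0}) else ω ^ γ * m + 1

/-- `C` is closed and unbounded in `o`. -/
def IsClubIn (C : Set Ordinal.{0}) (o : Ordinal.{0}) : Prop :=
  C ⊆ Iio o ∧ (∀ x < o, ∃ y ∈ C, x ≤ y) ∧
    ∀ x < o, x ≠ 0 → (∀ y < x, ∃ z ∈ C, y < z ∧ z < x) → x ∈ C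

/-- `S` is stationary in `o`: it meets every club subset of `o`. -/
def StationaryIn (S : Set Ordinal.{0}) (o : Ordinal.{0}) : Prop :=
  ∀ C, IsClubIn C o → (S ∩ C).Nonempty


namespace ColourAux

def LimPt (s : Set Ordinal.{0}) (z : Ordinal.{0}) : Prop := ∀ a < z, ∃ y ∈ s, a < y ∧ y < z

theorem limPt_mono {s t : Set Ordinal.{0}} (h : s ⊆ t) {z} (hz : LimPt s z) : LimPt t z :=
  fun a ha => let ⟨y, hy, h1, h2⟩ := hz a ha; ⟨y, h hy, h1, h2⟩

theorem mem_deriv'_iff {s : Set Ordinal.{0}} {z : Ordinal.{0}} :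
    z ∈ deriv' s ↔ z ∈ s ∧ 0 < z ∧ LimPt s z := by
  constructor
  · rintro ⟨hzs, hcl⟩
    rw [mem_closure_iff] at hcl
    have h0 : 0 < z := by
      rcases eq_zero_or_pos z with rfl | h
      · obtain ⟨y, hy1, hy2⟩ := hcl (Iio 1) isOpen_Iio (by simp)
        have : y = 0 := Ordinal.lt_one_iff_zero.1 hy1
        exact absurd this hy2.2
      · exact h
    refine ⟨hzs, h0, fun a ha => ?_⟩
    obtain ⟨y, hy1, hy2⟩ := hcl (Ioo a (z+1)) isOpen_Ioo ⟨ha, by rw [Ordinal.add_one_eq_succ]; exact Order.lt_succ z⟩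
    refine ⟨y, hy2.1, hy1.1, ?_⟩
    have : y ≤ z := by
      have := hy1.2
      rw [Ordinal.add_one_eq_succ, Order.lt_succ_iff] at this
      exact this
    exact lt_of_le_of_ne this hy2.2
  · rintro ⟨hzs, h0, hLP⟩
    refine ⟨hzs, ?_⟩
    rw [Ordinal.mem_closure_iff_bsup]
    refine ⟨z, ne_of_gt h0, fun x hx => (hLP x hx).choose, fun x hx => ?_, ?_⟩
    · obtain ⟨hy, _, hlt⟩ := (hLP x hx).choose_spec
      exact ⟨hy, ne_of_lt hlt⟩
    · apply le_antisymm
      · exact Ordinal.bsup_le fun x hx => le_of_lt (hLP x hx).choose_spec.2.2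
      · by_contra hlt
        push_neg at hlt
        have h1 := Ordinal.le_bsup (fun x (hx : x < z) => (hLP x hx).choose) _ hlt
        have h2 := (hLP _ hlt).choose_spec.2.1
        exact absurd h1 (not_le.2 h2)

def iterDerivN (s : Set Ordinal.{0}) (i : ℕ) : Set Ordinal.{0} := deriv'^[i] s

theorem iterDerivN_zero (s : Set Ordinal.{0}) : iterDerivN s 0 = s := rfl

theorem iterDerivN_succ (s : Set Ordinal.{0}) (i : ℕ) :
    iterDerivN s (i+1) = deriv' (iterDerivN s i) := Function.iterate_succ_apply' _ _ _

theorem deriv'_subset (s : Set Ordinal.{0}) : deriv' s ⊆ s := fun _ hx => hx.1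

theorem iterDerivN_subset (s : Set Ordinal.{0}) (i : ℕ) : iterDerivN s i ⊆ s := by
  induction i with
  | zero => exact subset_rfl
  | succ i ih => rw [iterDerivN_succ]; exact (deriv'_subset _).trans ih

theorem iterDeriv_natCast (s : Set Ordinal.{0}) (i : ℕ) :
    iterDeriv s (i : Ordinal.{0}) = iterDerivN s i := by
  induction i with
  | zero => rw [Nat.cast_zero, iterDeriv, Ordinal.limitRecOn_zero]; rfl
  | succ i ih =>
    have h : ((i+1 : ℕ) : Ordinal.{0}) = Order.succ (i : Ordinal.{0}) := by
      push_cast; rw [Ordinal.add_one_eq_succ]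
    rw [h, iterDeriv, Ordinal.limitRecOn_succ, iterDerivN_succ]
    exact congrArg deriv' ih


theorem homeo_of_good (α : Ordinal.{0}) (hα : Order.IsSuccLimit α) (f : Ordinal.{0} → Ordinal.{0})
    (X : Set Ordinal.{0})
    (hX : X = f '' Iio α)
    (hmono : ∀ a b, a < b → b < α → f a < f b)
    (hbd : ∀ b, b < α → f b < α)
    (hunb : ∀ a, a < α → ∃ b, b < α ∧ a < f b)
    (hcont : ∀ β, β < α → Order.IsSuccLimit β → ∀ a < f β, ∃ γ < β, a ≤ f γ) :
    Nonempty ((Iio α : Set Ordinal.{0}) ≃ₜ X) := by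
  have hmonole : ∀ a b, a ≤ b → b < α → f a ≤ f b := by
    intro a b hab hb
    rcases eq_or_lt_of_le hab with rfl | h
    · exact le_rfl
    · exact le_of_lt (hmono a b h hb)
  have hrefl : ∀ a b, a < α → b < α → f a ≤ f b → a ≤ b := by
    intro a b ha hb h
    by_contra hh; push_neg at hh
    exact absurd h (not_le.2 (hmono b a hh ha))
  set F : Ordinal.{0} → Ordinal.{0} := fun x => if x < α then f x else x with hF
  have hFmono : StrictMono F := by
    intro a b hab
    by_cases hbα : b < α
    · simp only [hF, if_pos (hab.trans hbα), if_pos hbα]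
      exact hmono a b hab hbα
    · by_cases haα : a < α
      · simp only [hF, if_pos haα, if_neg hbα]
        exact (hbd a haα).trans_le (not_lt.1 hbα)
      · simp only [hF, if_neg haα, if_neg hbα]; exact hab
  have hFnormal : Order.IsNormal F := by
    rw [Order.isNormal_iff]
    refine ⟨hFmono, fun o ho a ha => ?_⟩
    rcases lt_trichotomy o α with h | rfl | h
    · simp only [hF, if_pos h]
      by_contra hlt
      push_neg at hlt
      obtain ⟨γ, hγ, hγ2⟩ := hcont o h ho a hlt
      have hsγ : γ + 1 < o := by rw [Ordinal.add_one_eq_succ]; exact ho.succ_lt hγ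
      have h1 := ha (γ+1) hsγ
      simp only [hF, if_pos (hsγ.trans h)] at h1
      have h2 : f γ < f (γ+1) := hmono γ (γ+1) (lt_add_one γ) (hsγ.trans h)
      exact absurd (hγ2.trans_lt h2) (not_lt.2 h1)
    · simp only [hF, lt_irrefl, if_neg (lt_irrefl o)]
      by_contra hlt
      push_neg at hlt
      obtain ⟨b, hb, hb2⟩ := hunb a hlt
      have h1 := ha b hb
      simp only [hF, if_pos hb] at h1
      exact absurd h1 (not_le.2 hb2)
    · simp only [hF, if_neg (not_lt.2 (le_of_lt h))]
      by_contra hlt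
      push_neg at hlt
      have hb1 : max (a+1) α < o :=
        max_lt (by rw [Ordinal.add_one_eq_succ]; exact ho.succ_lt hlt) h
      have h1 := ha _ hb1
      simp only [hF, if_neg (not_lt.2 (le_max_right (a+1) α))] at h1
      have : a + 1 ≤ max (a+1) α := le_max_left _ _
      have : a < max (a+1) α := by
        rw [Ordinal.add_one_eq_succ] at this
        exact (Order.succ_le_iff).1 this
      exact absurd h1 (not_le.2 this)
  have hFcont : Continuous F := ((Order.isNormal_iff_strictMono_and_continuous).1 hFnormal).2
  have hmem : ∀ β : ↥(Iio α), f ↑β ∈ X := fun β => hX ▸ mem_image_of_mem f β.2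
  let e0 : ↥(Iio α) → ↥X := fun β => ⟨f ↑β, hmem β⟩
  have hbij : Function.Bijective e0 := by
    constructor
    · rintro ⟨a, ha⟩ ⟨b, hb⟩ h
      have h' : f a = f b := congrArg Subtype.val h
      have : a = b := by
        rcases lt_trichotomy a b with hh | hh | hh
        · exact absurd h' (ne_of_lt (hmono a b hh hb))
        · exact hh
        · exact absurd h'.symm (ne_of_lt (hmono b a hh ha))
      exact Subtype.ext this
    · rintro ⟨z, hz⟩
      rw [hX] at hz
      obtain ⟨β, hβ, rfl⟩ := hz
      exact ⟨⟨β, hβ⟩, rfl⟩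
  let e : ↥(Iio α) ≃ ↥X := Equiv.ofBijective e0 hbij
  have hce : Continuous e0 := by
    apply Continuous.subtype_mk
    have hfun : (fun β : ↥(Iio α) => f ↑β) = fun β : ↥(Iio α) => F ↑β :=
      funext fun β => (if_pos β.2).symm
    rw [hfun]
    exact hFcont.comp continuous_subtype_val
  have hsymm : ∀ z : ↥X, f ↑(e.symm z) = ↑z := by
    intro z
    have := e.apply_symm_apply z
    exact congrArg Subtype.val this
  have hcsymm : Continuous fun z : ↥X => ((e.symm z : ↥(Iio α)) : Ordinal.{0}) := by
    rw [continuous_iff_continuousAt]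
    intro z₀
    set β₀ := ((e.symm z₀ : ↥(Iio α)) : Ordinal.{0}) with hβ₀
    have hβ₀α : β₀ < α := (e.symm z₀).2
    have hz₀ : (z₀ : Ordinal) = f β₀ := (hsymm z₀).symm
    by_cases hlim : Order.IsSuccLimit β₀
    · rw [ContinuousAt]
      rw [(SuccOrder.hasBasis_nhds_Ioc_of_exists_lt ⟨0, hlim.pos⟩).tendsto_right_iff]
      intro γ hγ
      have hγα : γ < α := hγ.trans hβ₀α
      have hopen : IsOpen ((Subtype.val : ↥X → Ordinal.{0}) ⁻¹' Ioo (f γ) ((z₀ : Ordinal)+1)) :=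
        isOpen_Ioo.preimage continuous_subtype_val
      have hz₀W : z₀ ∈ (Subtype.val : ↥X → Ordinal.{0}) ⁻¹' Ioo (f γ) ((z₀ : Ordinal)+1) := by
        refine ⟨?_, ?_⟩
        · rw [hz₀]; exact hmono γ β₀ hγ hβ₀α
        · rw [Ordinal.add_one_eq_succ]; exact Order.lt_succ _
      filter_upwards [hopen.mem_nhds hz₀W] with w hw
      obtain ⟨hw1, hw2⟩ := hw
      set δ := ((e.symm w : ↥(Iio α)) : Ordinal.{0}) with hδ
      have hfδ : f δ = ↑w := hsymm w
      have hδα : δ < α := (e.symm w).2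
      have hwle : (w : Ordinal) ≤ f β₀ := by
        rw [← hz₀]
        rw [Ordinal.add_one_eq_succ, Order.lt_succ_iff] at hw2
        exact hw2
      constructor
      · by_contra h
        push_neg at h
        have := hmonole δ γ h hγα
        rw [hfδ] at this
        exact absurd hw1 (not_lt.2 this)
      · exact hrefl δ β₀ hδα hβ₀α (by rw [hfδ]; exact hwle)
    · have hiso : IsOpen ({z₀} : Set ↥X) := by
        rcases Ordinal.zero_or_succ_or_isSuccLimit β₀ with h0 | ⟨δ, hδ⟩ | h
        · have : {z₀} = (Subtype.val : ↥X → Ordinal.{0}) ⁻¹' Iio ((z₀ : Ordinal)+1) := by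
            apply Subset.antisymm
            · rintro w rfl
              simp only [mem_preimage, mem_Iio]
              rw [Ordinal.add_one_eq_succ]; exact Order.lt_succ _
            · intro w hw
              simp only [mem_preimage, mem_Iio] at hw
              rw [Ordinal.add_one_eq_succ, Order.lt_succ_iff, hz₀] at hw
              set δw := ((e.symm w : ↥(Iio α)) : Ordinal.{0})
              have hfw : f δw = ↑w := hsymm w
              have : δw ≤ β₀ := hrefl δw β₀ (e.symm w).2 hβ₀α (by rw [hfw]; exact hw)
              rw [h0, nonpos_iff_eq_zero] at this
              have : (w : Ordinal) = (z₀ : Ordinal) := by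
                rw [← hfw, hz₀, h0, this]
              exact Set.mem_singleton_iff.2 (Subtype.ext this)
          rw [this]
          exact isOpen_Iio.preimage continuous_subtype_val
        · have hδα : δ < α := (lt_of_lt_of_le (Order.lt_succ δ) (hδ ▸ le_rfl)).trans hβ₀α
          have : {z₀} = (Subtype.val : ↥X → Ordinal.{0}) ⁻¹' Ioo (f δ) ((z₀ : Ordinal)+1) := by
            apply Subset.antisymm
            · rintro w rfl
              refine ⟨?_, ?_⟩
              · rw [hz₀]
                exact hmono δ β₀ (hδ ▸ Order.lt_succ δ) hβ₀α
              · rw [Ordinal.add_one_eq_succ]; exact Order.lt_succ _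
            · rintro w ⟨hw1, hw2⟩
              rw [Ordinal.add_one_eq_succ, Order.lt_succ_iff, hz₀] at hw2
              set δw := ((e.symm w : ↥(Iio α)) : Ordinal.{0})
              have hfw : f δw = ↑w := hsymm w
              have hup : δw ≤ β₀ := hrefl δw β₀ (e.symm w).2 hβ₀α (by rw [hfw]; exact hw2)
              have hlow : δ < δw := by
                by_contra hh
                push_neg at hh
                have := hmonole δw δ hh hδα
                rw [hfw] at this
                exact absurd hw1 (not_lt.2 this)
              have : δw = β₀ := le_antisymm hup (by rw [← hδ]; exact Order.succ_le_of_lt hlow)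
              have hww : (w : Ordinal) = (z₀ : Ordinal) := by rw [← hfw, this, ← hz₀]
              exact Set.mem_singleton_iff.2 (Subtype.ext hww)
          rw [this]
          exact isOpen_Ioo.preimage continuous_subtype_val
        · exact absurd h hlim
      rw [ContinuousAt, (isOpen_singleton_iff_nhds_eq_pure z₀).1 hiso]
      exact tendsto_pure_nhds _ _
  exact ⟨{ toEquiv := e, continuous_toFun := hce,
           continuous_invFun := continuous_induced_rng.2 hcsymm }⟩


section Step

variable {b : Ordinal.{0}} {g : ℕ → ℕ}

theorem sep_le (hg : StrictMono g) {j j' : ℕ} (h : j < j') :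
    b * (g j : Ordinal.{0}) + b ≤ b * (g j' : Ordinal.{0}) := by
  have h1 : b * (g j : Ordinal.{0}) + b = b * ((g j : Ordinal.{0}) + 1) := by
    rw [Ordinal.add_one_eq_succ, Ordinal.mul_succ]
  rw [h1]
  apply mul_le_mul_right
  have : g j + 1 ≤ g j' := hg h
  exact_mod_cast this

theorem mem_piece_bounds (hb : b ≠ 0) {S : Set Ordinal.{0}} (hS : S ⊆ Ioo 0 b) {j : ℕ} {z : Ordinal.{0}}
    (hz : z ∈ (fun x => b * (g j : Ordinal.{0}) + x) '' S ∪ {b * (g j : Ordinal.{0}) + b}) :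
    b * (g j : Ordinal.{0}) < z ∧ z ≤ b * (g j : Ordinal.{0}) + b := by
  rcases hz with ⟨x, hx, rfl⟩ | rfl
  · obtain ⟨hx0, hxb⟩ := hS hx
    exact ⟨(lt_add_iff_pos_right _).2 hx0, add_le_add_right (le_of_lt hxb) _⟩
  · exact ⟨(lt_add_iff_pos_right _).2 (pos_iff_ne_zero.2 hb), le_rfl⟩

theorem transLP {S : Set Ordinal.{0}} {j : ℕ} {y : Ordinal.{0}} (hy : 0 < y) :
    LimPt ((fun x => b * (g j : Ordinal.{0}) + x) '' S) (b * (g j : Ordinal.{0}) + y) ↔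
      LimPt S y := by
  constructor
  · intro h a' ha'
    obtain ⟨w, hw, hw1, hw2⟩ := h (b * (g j : Ordinal.{0}) + a') (add_lt_add_right ha' _)
    obtain ⟨x, hx, rfl⟩ := hw
    exact ⟨x, hx, (add_lt_add_iff_left _).1 hw1, (add_lt_add_iff_left _).1 hw2⟩
  · intro h a ha
    set A := max a (b * (g j : Ordinal.{0})) with hA
    have hAlt : A < b * (g j : Ordinal.{0}) + y := max_lt ha ((lt_add_iff_pos_right _).2 hy)
    have hble : b * (g j : Ordinal.{0}) ≤ A := le_max_right _ _
    have hAeq : b * (g j : Ordinal.{0}) + (A - b * (g j : Ordinal.{0})) = A :=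
      Ordinal.add_sub_cancel_of_le hble
    have ha' : A - b * (g j : Ordinal.{0}) < y := by
      rw [← add_lt_add_iff_left (b * (g j : Ordinal.{0})), hAeq]
      exact hAlt
    obtain ⟨x, hx, hx1, hx2⟩ := h _ ha'
    refine ⟨b * (g j : Ordinal.{0}) + x, mem_image_of_mem _ hx, ?_, add_lt_add_right hx2 _⟩
    calc a ≤ A := le_max_left _ _
    _ = b * (g j : Ordinal.{0}) + (A - b * (g j : Ordinal.{0})) := hAeq.symm
    _ < b * (g j : Ordinal.{0}) + x := add_lt_add_right hx1 _

theorem topLP {S : Set Ordinal.{0}} {j : ℕ} (hb : b ≠ 0)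
    (hS : S ⊆ Ioo 0 b) (hUnb : ∀ a < b, ∃ x ∈ S, a < x) :
    LimPt ((fun x => b * (g j : Ordinal.{0}) + x) '' S) (b * (g j : Ordinal.{0}) + b) := by
  intro a ha
  set A := max a (b * (g j : Ordinal.{0})) with hA
  have hAlt : A < b * (g j : Ordinal.{0}) + b :=
    max_lt ha ((lt_add_iff_pos_right _).2 (pos_iff_ne_zero.2 hb))
  have hble : b * (g j : Ordinal.{0}) ≤ A := le_max_right _ _
  have hAeq : b * (g j : Ordinal.{0}) + (A - b * (g j : Ordinal.{0})) = A :=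
    Ordinal.add_sub_cancel_of_le hble
  have ha' : A - b * (g j : Ordinal.{0}) < b := by
    rw [← add_lt_add_iff_left (b * (g j : Ordinal.{0})), hAeq]
    exact hAlt
  obtain ⟨x, hx, hx1⟩ := hUnb _ ha'
  refine ⟨b * (g j : Ordinal.{0}) + x, mem_image_of_mem _ hx, ?_, add_lt_add_right (hS hx).2 _⟩
  calc a ≤ A := le_max_left _ _
  _ = b * (g j : Ordinal.{0}) + (A - b * (g j : Ordinal.{0})) := hAeq.symm
  _ < b * (g j : Ordinal.{0}) + x := add_lt_add_right hx1 _

theorem LPiff (hb : b ≠ 0) (hg : StrictMono g) {S : ℕ → Set Ordinal.{0}} (hS : ∀ j, S j ⊆ Ioo 0 b)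
    {j : ℕ} {z : Ordinal.{0}} (h1 : b * (g j : Ordinal.{0}) < z)
    (h2 : z ≤ b * (g j : Ordinal.{0}) + b) :
    LimPt (⋃ j', ((fun x => b * (g j' : Ordinal.{0}) + x) '' S j' ∪
        {b * (g j' : Ordinal.{0}) + b})) z ↔
      LimPt ((fun x => b * (g j : Ordinal.{0}) + x) '' S j) z := by
  constructor
  · intro h a ha
    set A := max a (b * (g j : Ordinal.{0})) with hA
    have hAlt : A < z := max_lt ha h1
    obtain ⟨y, hy, hy1, hy2⟩ := h A hAlt
    rw [mem_iUnion] at hy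
    obtain ⟨j'', hy⟩ := hy
    rcases lt_trichotomy j'' j with hlt | rfl | hgt
    · obtain ⟨hb1, hb2⟩ := mem_piece_bounds hb (hS j'') hy
      have : y ≤ A := le_trans hb2 (le_trans (sep_le hg hlt) (le_max_right _ _))
      exact absurd hy1 (not_lt.2 this)
    · rcases hy with hy | rfl
      · exact ⟨y, hy, lt_of_le_of_lt (le_max_left _ _) hy1, hy2⟩
      · exact absurd hy2 (not_lt.2 h2)
    · obtain ⟨hb1, hb2⟩ := mem_piece_bounds hb (hS j'') hy
      have : z ≤ y := le_trans h2 (le_trans (sep_le hg hgt) (le_of_lt hb1))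
      exact absurd hy2 (not_lt.2 this)
  · intro h
    apply limPt_mono _ h
    intro w hw
    rw [mem_iUnion]
    exact ⟨j, Or.inl hw⟩

theorem step_deriv (hb : b ≠ 0) (hg : StrictMono g) {S : ℕ → Set Ordinal.{0}}
    (hS : ∀ j, S j ⊆ Ioo 0 b) (hUnb : ∀ j, ∀ a < b, ∃ x ∈ S j, a < x) :
    deriv' (⋃ j, ((fun x => b * (g j : Ordinal.{0}) + x) '' S j ∪
        {b * (g j : Ordinal.{0}) + b})) =
      ⋃ j, ((fun x => b * (g j : Ordinal.{0}) + x) '' deriv' (S j) ∪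
        {b * (g j : Ordinal.{0}) + b}) := by
  ext z
  rw [mem_deriv'_iff]
  constructor
  · rintro ⟨hzU, hz0, hL⟩
    rw [mem_iUnion] at hzU
    obtain ⟨j, hzj⟩ := hzU
    rcases hzj with ⟨x, hx, rfl⟩ | rfl
    · obtain ⟨hx0, hxb⟩ := hS j hx
      have hzmem : b * (g j : Ordinal.{0}) + x ∈
          (fun x => b * (g j : Ordinal.{0}) + x) '' S j ∪ {b * (g j : Ordinal.{0}) + b} :=
        Or.inl (mem_image_of_mem _ hx)
      have hbds := mem_piece_bounds hb (hS j) hzmem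
      have hLx : LimPt (S j) x :=
        (transLP hx0).1 ((LPiff hb hg hS hbds.1 hbds.2).1 hL)
      rw [mem_iUnion]
      exact ⟨j, Or.inl (mem_image_of_mem _ (mem_deriv'_iff.2 ⟨hx, hx0, hLx⟩))⟩
    · rw [mem_iUnion]
      exact ⟨j, Or.inr rfl⟩
  · intro hz
    rw [mem_iUnion] at hz
    obtain ⟨j, hzj⟩ := hz
    rcases hzj with ⟨x, hx, rfl⟩ | rfl
    · obtain ⟨hxS, hx0, hLx⟩ := mem_deriv'_iff.1 hx
      refine ⟨?_, ?_, ?_⟩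
      · rw [mem_iUnion]
        exact ⟨j, Or.inl (mem_image_of_mem _ hxS)⟩
      · exact lt_of_le_of_lt zero_le ((lt_add_iff_pos_right _).2 hx0)
      · apply limPt_mono _ ((transLP hx0).2 hLx)
        intro w hw
        rw [mem_iUnion]
        exact ⟨j, Or.inl hw⟩
    · refine ⟨?_, ?_, ?_⟩
      · rw [mem_iUnion]
        exact ⟨j, Or.inr rfl⟩
      · exact lt_of_le_of_lt zero_le
          ((lt_add_iff_pos_right _).2 (pos_iff_ne_zero.2 hb))
      · apply limPt_mono _ (topLP hb (hS j) (hUnb j))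
        intro w hw
        rw [mem_iUnion]
        exact ⟨j, Or.inl hw⟩

theorem tops_deriv (hb : b ≠ 0) (hg : StrictMono g) :
    deriv' (⋃ j, ({b * (g j : Ordinal.{0}) + b} : Set Ordinal.{0})) = ∅ := by
  ext z
  simp only [mem_empty_iff_false, iff_false]
  intro hz
  obtain ⟨hzU, hz0, hL⟩ := mem_deriv'_iff.1 hz
  rw [mem_iUnion] at hzU
  obtain ⟨j, hzj⟩ := hzU
  rcases hzj with rfl
  obtain ⟨y, hy, hy1, hy2⟩ := hL (b * (g j : Ordinal.{0}))
    ((lt_add_iff_pos_right _).2 (pos_iff_ne_zero.2 hb))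
  rw [mem_iUnion] at hy
  obtain ⟨j'', rfl⟩ := hy
  rcases lt_or_ge j'' j with hlt | hge
  · exact absurd hy1 (not_lt.2 (sep_le hg hlt))
  · have : b * (g j : Ordinal.{0}) + b ≤ b * (g j'' : Ordinal.{0}) + b := by
      apply add_le_add_left
      apply mul_le_mul_right
      exact_mod_cast hg.monotone hge
    exact absurd hy2 (not_lt.2 this)

end Step


def onat (o : Ordinal.{0}) : ℕ := (Ordinal.card o).toNat

theorem onat_cast (m : ℕ) : onat ((m : ℕ) : Ordinal.{0}) = m := by
  rw [onat, Ordinal.card_nat, Cardinal.toNat_natCast]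

theorem base (k : ℕ) (c : Ordinal.{0} → Fin k) :
    ∃ (X : Set Ordinal.{0}) (f : Ordinal.{0} → Ordinal.{0}) (t : Fin k),
      X = f '' Iio ω ∧
      (∀ a b', a < b' → b' < ω → f a < f b') ∧
      (X ⊆ Ioo 0 ω) ∧
      (∀ β, β < ω → Order.IsSuccLimit β → ∀ a < f β, ∃ γ < β, a ≤ f γ) ∧
      (∀ a < ω, ∃ x ∈ X, a < x) ∧
      deriv' X = ∅ ∧
      (∀ x ∈ X, c x = t) := by
  obtain ⟨t, ht⟩ := Finite.exists_infinite_fiber (fun m : ℕ => c (((m+1 : ℕ) : Ordinal.{0})))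
  rw [Set.infinite_coe_iff] at ht
  set p : ℕ → Prop := fun m => c (((m+1 : ℕ) : Ordinal.{0})) = t with hp
  have hpinf : (setOf p).Infinite := ht
  set w : ℕ → ℕ := fun j => Nat.nth p j + 1 with hw
  have hwmono : StrictMono w := fun a b' h =>
    Nat.add_lt_add_right ((Nat.nth_strictMono hpinf) h) 1
  have hwc : ∀ j, c (((w j : ℕ) : Ordinal.{0})) = t := fun j => Nat.nth_mem_of_infinite hpinf j
  set f : Ordinal.{0} → Ordinal.{0} := fun β => ((w (onat β) : ℕ) : Ordinal.{0}) with hf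
  have hfnat : ∀ m : ℕ, f ((m : ℕ) : Ordinal.{0}) = ((w m : ℕ) : Ordinal.{0}) := by
    intro m
    rw [hf]
    simp only [onat_cast]
  refine ⟨f '' Iio ω, f, t, rfl, ?_, ?_, ?_, ?_, ?_, ?_⟩
  · intro a b' hab hb'
    obtain ⟨nb, rfl⟩ := lt_omega0.1 hb'
    obtain ⟨na, rfl⟩ := lt_omega0.1 (hab.trans hb')
    rw [hfnat, hfnat]
    have : na < nb := by exact_mod_cast hab
    exact_mod_cast hwmono this
  · rintro x ⟨β, hβ, rfl⟩
    obtain ⟨m, rfl⟩ := lt_omega0.1 hβ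
    rw [hfnat]
    constructor
    · exact_mod_cast Nat.succ_pos (Nat.nth p m)
    · exact nat_lt_omega0 _
  · intro β hβ hlim
    exact absurd (omega0_le_of_isSuccLimit hlim) (not_le.2 hβ)
  · intro a ha
    obtain ⟨m, rfl⟩ := lt_omega0.1 ha
    refine ⟨f ((m : ℕ) : Ordinal.{0}), mem_image_of_mem f (nat_lt_omega0 m), ?_⟩
    rw [hfnat]
    have h1 : m ≤ Nat.nth p m := (Nat.nth_strictMono hpinf).le_apply
    have : m < w m := Nat.lt_succ_of_le h1
    exact_mod_cast this
  · ext z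
    simp only [mem_empty_iff_false, iff_false]
    intro hz
    obtain ⟨hzX, hz0, hL⟩ := mem_deriv'_iff.1 hz
    obtain ⟨β, hβ, rfl⟩ := hzX
    obtain ⟨m, rfl⟩ := lt_omega0.1 hβ
    rw [hfnat] at hL
    obtain ⟨y, hy, hy1, hy2⟩ := hL ((Nat.nth p m : ℕ) : Ordinal.{0})
      (by exact_mod_cast Nat.lt_succ_self (Nat.nth p m))
    obtain ⟨βy, hβy, rfl⟩ := hy
    obtain ⟨my, rfl⟩ := lt_omega0.1 hβy
    rw [hfnat] at hy1 hy2
    have h1 : Nat.nth p m < w my := by exact_mod_cast hy1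
    have h2 : w my < w m := by exact_mod_cast hy2
    have h3 : w m = Nat.nth p m + 1 := rfl
    omega
  · rintro x ⟨β, hβ, rfl⟩
    obtain ⟨m, rfl⟩ := lt_omega0.1 hβ
    rw [hfnat]
    exact hwc m


theorem key (k : ℕ) : ∀ (n : ℕ), 0 < n → ∀ c : Ordinal.{0} → Fin k,
    ∃ (X : Set Ordinal.{0}) (f : Ordinal.{0} → Ordinal.{0}) (d : ℕ → Fin k),
      X = f '' Iio (ω ^ (n : Ordinal.{0})) ∧
      (∀ a b', a < b' → b' < ω ^ (n : Ordinal.{0}) → f a < f b') ∧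
      (X ⊆ Ioo 0 (ω ^ (n : Ordinal.{0}))) ∧
      (∀ β, β < ω ^ (n : Ordinal.{0}) → Order.IsSuccLimit β → ∀ a < f β, ∃ γ < β, a ≤ f γ) ∧
      (∀ i : ℕ, i < n → ∀ a < ω ^ (n : Ordinal.{0}), ∃ x ∈ iterDerivN X i, a < x) ∧
      iterDerivN X n = ∅ ∧
      (∀ i : ℕ, i < n → ∀ x ∈ iterDerivN X i \ iterDerivN X (i+1), c x = d i) := by
  intro n
  induction n with
  | zero => exact fun h => absurd h (lt_irrefl 0)
  | succ n ih =>
    intro _ c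
    rcases Nat.eq_zero_or_pos n with rfl | hn
    · -- base case : n + 1 = 1
      have hω1 : ω ^ (((0+1 : ℕ)) : Ordinal.{0}) = ω := by
        norm_num
      obtain ⟨X, f, t, h1, h2, h3, h4, h5, h6, h7⟩ := base k c
      refine ⟨X, f, fun _ => t, ?_, ?_, ?_, ?_, ?_, ?_, ?_⟩
      · rw [hω1]; exact h1
      · rw [hω1]; exact h2
      · rw [hω1]; exact h3
      · rw [hω1]; exact h4
      · intro i hi a ha
        interval_cases i
        rw [hω1] at ha
        exact h5 a ha
      · rw [iterDerivN_succ, iterDerivN_zero]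
        exact h6
      · intro i hi x hx
        interval_cases i
        rw [iterDerivN_succ, iterDerivN_zero, h6, diff_empty] at hx
        exact h7 x hx
    · -- inductive step
      set b : Ordinal.{0} := ω ^ (n : Ordinal.{0}) with hbdef
      have hb0 : b ≠ 0 := (opow_pos _ omega0_pos).ne'
      have hbpos : (0:Ordinal.{0}) < b := opow_pos _ omega0_pos
      have hb1 : b + 1 ≠ 0 :=
        ne_of_gt (lt_of_le_of_lt (zero_le : (0:Ordinal.{0}) ≤ b) (lt_add_one b))
      have hbω : ω ≤ b := by
        calc ω = ω ^ (1:Ordinal.{0}) := (opow_one ω).symm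
        _ ≤ b := opow_le_opow_right omega0_pos (by exact_mod_cast hn)
      have htarget : ω ^ (((n+1 : ℕ)) : Ordinal.{0}) = b * ω := by
        rw [Nat.cast_succ, Ordinal.add_one_eq_succ, opow_succ]
      have hb1ω : (b + 1) * ω = b * ω :=
        Ordinal.add_mul_of_isSuccLimit (Ordinal.one_add_of_omega0_le hbω) isSuccLimit_omega0
      choose X f d hA hB hC hD hE1 hE2 hF using fun m : ℕ =>
        ih hn (fun x => c (b * ((m:ℕ) : Ordinal.{0}) + x))
      obtain ⟨v0, hv0⟩ := Finite.exists_infinite_fiber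
        (fun m : ℕ => ((fun i : Fin n => d m (i:ℕ), c (b * ((m:ℕ) : Ordinal.{0}) + b)) :
          (Fin n → Fin k) × Fin k))
      rw [Set.infinite_coe_iff] at hv0
      set p : ℕ → Prop := fun m =>
        ((fun i : Fin n => d m (i:ℕ), c (b * ((m:ℕ) : Ordinal.{0}) + b)) :
          (Fin n → Fin k) × Fin k) = v0 with hpdef
      have hpinf : (setOf p).Infinite := hv0
      set g : ℕ → ℕ := Nat.nth p with hgdef
      have hgmono : StrictMono g := Nat.nth_strictMono hpinf
      have hgmem : ∀ j, p (g j) := Nat.nth_mem_of_infinite hpinf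
      have hgd : ∀ j, ∀ i : Fin n, d (g j) (i:ℕ) = v0.1 i := fun j i =>
        congrFun (congrArg Prod.fst (hgmem j)) i
      have htt : ∀ j, c (b * ((g j : ℕ) : Ordinal.{0}) + b) = v0.2 := fun j =>
        congrArg Prod.snd (hgmem j)
      set f' : Ordinal.{0} → Ordinal.{0} := fun x =>
        if x % (b+1) = b then b * ((g (onat (x / (b+1))) : ℕ) : Ordinal.{0}) + b
        else b * ((g (onat (x / (b+1))) : ℕ) : Ordinal.{0}) + f (g (onat (x / (b+1)))) (x % (b+1))
        with hf'
      have heval : ∀ (j : ℕ) (r : Ordinal.{0}), r ≤ b →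
          f' ((b+1) * ((j:ℕ) : Ordinal.{0}) + r) =
            if r = b then b * ((g j : ℕ) : Ordinal.{0}) + b
            else b * ((g j : ℕ) : Ordinal.{0}) + f (g j) r := by
        intro j r hr
        have hrlt : r < b + 1 := lt_of_le_of_lt hr (lt_add_one b)
        have hdiv : ((b+1) * ((j:ℕ) : Ordinal.{0}) + r) / (b+1) = ((j:ℕ) : Ordinal.{0}) := by
          rw [Ordinal.mul_add_div _ hb1, Ordinal.div_eq_zero_of_lt hrlt, add_zero]
        have hmod : ((b+1) * ((j:ℕ) : Ordinal.{0}) + r) % (b+1) = r := by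
          rw [Ordinal.mul_add_mod_self, Ordinal.mod_eq_of_lt hrlt]
        rw [hf']
        simp only [hdiv, hmod, onat_cast]
      have harglt : ∀ (j : ℕ) (r : Ordinal.{0}), r ≤ b →
          (b+1) * ((j:ℕ) : Ordinal.{0}) + r < b * ω := by
        intro j r hr
        have h1 : (b+1) * ((j:ℕ) : Ordinal.{0}) + r < (b+1) * ((j:ℕ) : Ordinal.{0}) + (b+1) :=
          add_lt_add_right (lt_of_le_of_lt hr (lt_add_one b)) _
        have h2 : (b+1) * ((j:ℕ) : Ordinal.{0}) + (b+1) = (b+1) * (((j+1:ℕ)) : Ordinal.{0}) := by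
          rw [Nat.cast_succ, mul_add, mul_one]
        have h3 : (b+1) * (((j+1:ℕ)) : Ordinal.{0}) ≤ (b+1) * ω :=
          mul_le_mul_right (le_of_lt (nat_lt_omega0 (j+1))) _
        calc (b+1) * ((j:ℕ) : Ordinal.{0}) + r
            < (b+1) * (((j+1:ℕ)) : Ordinal.{0}) := h2 ▸ h1
          _ ≤ (b+1) * ω := h3
          _ = b * ω := hb1ω
      set PU : Set Ordinal.{0} := ⋃ j, ((fun x => b * ((g j : ℕ) : Ordinal.{0}) + x) '' X (g j) ∪
        {b * ((g j : ℕ) : Ordinal.{0}) + b}) with hPU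
      have hdecomp : ∀ y, y < b * ω → ∃ (j : ℕ) (r : Ordinal.{0}),
          r ≤ b ∧ y = (b+1) * ((j:ℕ) : Ordinal.{0}) + r := by
        intro y hy
        have hq : y / (b+1) < ω := (Ordinal.div_lt hb1).2 (by rw [hb1ω]; exact hy)
        obtain ⟨m, hm⟩ := lt_omega0.1 hq
        refine ⟨m, y % (b+1), ?_, ?_⟩
        · have h1 := Ordinal.mod_lt y hb1
          exact Order.lt_succ_iff.1 (by rw [← Ordinal.add_one_eq_succ]; exact h1)
        · conv_lhs => rw [← Ordinal.div_add_mod y (b+1)]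
          rw [hm]
      have hXU : f' '' Iio (b * ω) = PU := by
        apply Subset.antisymm
        · rintro x ⟨y, hy, rfl⟩
          obtain ⟨j, r, hr, rfl⟩ := hdecomp y hy
          rw [heval j r hr]
          rcases eq_or_lt_of_le hr with hrB | hrlt
          · rw [if_pos hrB, hPU, mem_iUnion]
            exact ⟨j, Or.inr rfl⟩
          · rw [if_neg (ne_of_lt hrlt), hPU, mem_iUnion]
            refine ⟨j, Or.inl (mem_image_of_mem _ ?_)⟩
            rw [hA (g j)]
            exact mem_image_of_mem _ hrlt
        · intro x hx
          rw [hPU, mem_iUnion] at hx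
          obtain ⟨j, hx⟩ := hx
          rcases hx with ⟨u, hu, rfl⟩ | hx
          · rw [hA (g j)] at hu
            obtain ⟨γ, hγ, rfl⟩ := hu
            refine ⟨(b+1) * ((j:ℕ) : Ordinal.{0}) + γ, harglt j γ (le_of_lt hγ), ?_⟩
            rw [heval j γ (le_of_lt hγ), if_neg (ne_of_lt hγ)]
          · rw [mem_singleton_iff] at hx
            subst hx
            refine ⟨(b+1) * ((j:ℕ) : Ordinal.{0}) + b, harglt j b le_rfl, ?_⟩
            rw [heval j b le_rfl, if_pos rfl]
      have hfle : ∀ (j : ℕ) (r : Ordinal.{0}), r ≤ b →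
          f' ((b+1) * ((j:ℕ) : Ordinal.{0}) + r) ≤ b * ((g j : ℕ) : Ordinal.{0}) + b := by
        intro j r hr
        rw [heval j r hr]
        split_ifs with h
        · exact le_rfl
        · apply add_le_add_right
          apply le_of_lt
          have hmem : f (g j) r ∈ X (g j) := by
            rw [hA (g j)]; exact mem_image_of_mem _ (lt_of_le_of_ne hr h)
          exact (hC (g j) hmem).2
      have hfgt : ∀ (j : ℕ) (r : Ordinal.{0}), r ≤ b →
          b * ((g j : ℕ) : Ordinal.{0}) < f' ((b+1) * ((j:ℕ) : Ordinal.{0}) + r) := by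
        intro j r hr
        rw [heval j r hr]
        split_ifs with h
        · exact (lt_add_iff_pos_right _).2 hbpos
        · apply (lt_add_iff_pos_right _).2
          have hmem : f (g j) r ∈ X (g j) := by
            rw [hA (g j)]; exact mem_image_of_mem _ (lt_of_le_of_ne hr h)
          exact (hC (g j) hmem).1
      have hblock : ∀ (j j' : ℕ) (r r' : Ordinal.{0}), r ≤ b → j < j' →
          (b+1) * ((j:ℕ) : Ordinal.{0}) + r < (b+1) * ((j':ℕ) : Ordinal.{0}) + r' := by
        intro j j' r r' hr hjj
        have h1 : (b+1) * ((j:ℕ) : Ordinal.{0}) + r < (b+1) * (((j+1:ℕ)) : Ordinal.{0}) := by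
          have := add_lt_add_right (lt_of_le_of_lt hr (lt_add_one b)) ((b+1) * ((j:ℕ) : Ordinal.{0}))
          rwa [show (b+1) * ((j:ℕ) : Ordinal.{0}) + (b+1) = (b+1) * (((j+1:ℕ)) : Ordinal.{0}) by
            rw [Nat.cast_succ, mul_add, mul_one]] at this
        have h2 : (b+1) * (((j+1:ℕ)) : Ordinal.{0}) ≤ (b+1) * ((j':ℕ) : Ordinal.{0}) := by
          apply mul_le_mul_right
          exact_mod_cast hjj
        exact lt_of_lt_of_le (lt_of_lt_of_le h1 h2) le_self_add
      have hB' : ∀ x y, x < y → y < b * ω → f' x < f' y := by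
        intro x y hxy hyω
        have hxω := hxy.trans hyω
        obtain ⟨jx, rx, hrx, hxe⟩ := hdecomp x hxω
        obtain ⟨jy, ry, hry, hye⟩ := hdecomp y hyω
        rcases lt_trichotomy jx jy with hj | hj | hj
        · calc f' x ≤ b * ((g jx : ℕ) : Ordinal.{0}) + b := hxe ▸ hfle jx rx hrx
            _ ≤ b * ((g jy : ℕ) : Ordinal.{0}) := sep_le hgmono hj
            _ < f' y := hye ▸ hfgt jy ry hry
        · subst hj
          have hrr : rx < ry := by
            rw [hxe, hye] at hxy
            exact (add_lt_add_iff_left _).1 hxy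
          have hrxb : rx ≠ b := ne_of_lt (lt_of_lt_of_le hrr hry)
          rw [hxe, hye, heval jx rx hrx, heval jx ry hry, if_neg hrxb]
          split_ifs with h
          · apply add_lt_add_right
            have hmem : f (g jx) rx ∈ X (g jx) := by
              rw [hA (g jx)]; exact mem_image_of_mem _ (lt_of_le_of_ne hrx hrxb)
            exact (hC (g jx) hmem).2
          · exact add_lt_add_right (hB (g jx) rx ry hrr (lt_of_le_of_ne hry h)) _
        · exfalso
          have := hblock jy jx ry rx hry hj
          rw [← hxe, ← hye] at this
          exact absurd hxy (not_lt.2 (le_of_lt this))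
      have hC' : f' '' Iio (b * ω) ⊆ Ioo 0 (b * ω) := by
        rw [hXU]
        intro z hz
        rw [hPU, mem_iUnion] at hz
        obtain ⟨j, hz⟩ := hz
        have hb2 : b * ((g j : ℕ) : Ordinal.{0}) + b < b * ω := by
          rw [show b * ((g j : ℕ) : Ordinal.{0}) + b = b * (((g j + 1:ℕ)) : Ordinal.{0}) by
            rw [Nat.cast_succ, mul_add, mul_one]]
          exact mul_lt_mul_of_pos_left (nat_lt_omega0 _) hbpos
        obtain ⟨hlo, hhi⟩ := mem_piece_bounds hb0 (hC (g j)) hz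
        exact ⟨lt_of_le_of_lt zero_le hlo, lt_of_le_of_lt hhi hb2⟩
      have hD' : ∀ β, β < b * ω → Order.IsSuccLimit β → ∀ a < f' β, ∃ γ < β, a ≤ f' γ := by
        intro β hβ hlim a ha
        obtain ⟨m, r, hrb, hde⟩ := hdecomp β hβ
        have hnosucc : ∀ δ : Ordinal.{0}, β ≠ δ + 1 := by
          intro δ hδ
          have h1 : δ < β := by rw [hδ, Ordinal.add_one_eq_succ]; exact Order.lt_succ δ
          have h2 := hlim.succ_lt h1
          rw [hδ, Ordinal.add_one_eq_succ] at h2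
          exact absurd h2 (lt_irrefl _)
        have hr0 : r ≠ 0 := by
          intro h0
          rcases Nat.eq_zero_or_pos m with rfl | hm0
          · have hp0 := hlim.pos
            rw [hde, h0, Nat.cast_zero, mul_zero, zero_add] at hp0
            exact absurd hp0 (lt_irrefl 0)
          · obtain ⟨m', rfl⟩ := Nat.exists_eq_succ_of_ne_zero (Nat.pos_iff_ne_zero.1 hm0)
            apply hnosucc ((b+1) * ((m':ℕ) : Ordinal.{0}) + b)
            rw [hde, h0, add_zero, Nat.cast_succ, mul_add, mul_one, ← add_assoc]
        rcases lt_or_ge a (b * ((g m : ℕ) : Ordinal.{0})) with hlow | hhigh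
        · refine ⟨(b+1) * ((m:ℕ) : Ordinal.{0}), ?_, ?_⟩
          · rw [hde]
            exact (lt_add_iff_pos_right _).2 (pos_iff_ne_zero.2 hr0)
          · have h0 : f' ((b+1) * ((m:ℕ) : Ordinal.{0})) =
                b * ((g m : ℕ) : Ordinal.{0}) + f (g m) 0 := by
              have he := heval m 0 (zero_le : (0:Ordinal.{0}) ≤ b)
              rw [add_zero] at he
              rw [he, if_neg (ne_of_lt hbpos)]
            rw [h0]
            exact le_trans (le_of_lt hlow) le_self_add
        · set a' := a - b * ((g m : ℕ) : Ordinal.{0}) with ha'def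
          have haeq : b * ((g m : ℕ) : Ordinal.{0}) + a' = a := Ordinal.add_sub_cancel_of_le hhigh
          rcases eq_or_lt_of_le hrb with hrB | hrlt
          · have hfβ : f' β = b * ((g m : ℕ) : Ordinal.{0}) + b := by
              rw [hde, heval m r hrb, if_pos hrB]
            rw [hfβ] at ha
            have ha'b : a' < b := by
              rw [← add_lt_add_iff_left (b * ((g m : ℕ) : Ordinal.{0})), haeq]
              exact ha
            obtain ⟨x, hxX, hax⟩ := hE1 (g m) 0 hn a' ha'b
            rw [iterDerivN_zero, hA (g m)] at hxX
            obtain ⟨γ₀, hγ₀, rfl⟩ := hxX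
            refine ⟨(b+1) * ((m:ℕ) : Ordinal.{0}) + γ₀, ?_, ?_⟩
            · rw [hde]
              exact add_lt_add_right (by rw [hrB]; exact hγ₀) _
            · rw [heval m γ₀ (le_of_lt hγ₀), if_neg (ne_of_lt hγ₀), ← haeq]
              exact add_le_add_right (le_of_lt hax) _
          · have hrlim : Order.IsSuccLimit r := by
              rcases Ordinal.zero_or_succ_or_isSuccLimit r with h0 | ⟨δ, hδ⟩ | h
              · exact absurd h0 hr0
              · exfalso
                apply hnosucc ((b+1) * ((m:ℕ) : Ordinal.{0}) + δ)
                rw [hde, ← hδ, ← Ordinal.add_one_eq_succ, add_assoc]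
              · exact h
            have hfβ : f' β = b * ((g m : ℕ) : Ordinal.{0}) + f (g m) r := by
              rw [hde, heval m r hrb, if_neg (ne_of_lt hrlt)]
            rw [hfβ] at ha
            have ha'f : a' < f (g m) r := by
              rw [← add_lt_add_iff_left (b * ((g m : ℕ) : Ordinal.{0})), haeq]
              exact ha
            obtain ⟨γ₀, hγ₀, hγ₀2⟩ := hD (g m) r hrlt hrlim a' ha'f
            refine ⟨(b+1) * ((m:ℕ) : Ordinal.{0}) + γ₀, ?_, ?_⟩
            · rw [hde]
              exact add_lt_add_right hγ₀ _
            · have hγ₀b : γ₀ < b := hγ₀.trans hrlt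
              rw [heval m γ₀ (le_of_lt hγ₀b), if_neg (ne_of_lt hγ₀b), ← haeq]
              exact add_le_add_right hγ₀2 _
      have hSsub : ∀ (i : ℕ) (j : ℕ), iterDerivN (X (g j)) i ⊆ Ioo 0 b :=
        fun i j => (iterDerivN_subset _ i).trans (hC (g j))
      have hform : ∀ i : ℕ, i ≤ n → iterDerivN (f' '' Iio (b * ω)) i =
          ⋃ j, ((fun x => b * ((g j : ℕ) : Ordinal.{0}) + x) '' iterDerivN (X (g j)) i ∪
            {b * ((g j : ℕ) : Ordinal.{0}) + b}) := by
        intro i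
        induction i with
        | zero =>
          intro _
          rw [iterDerivN_zero, hXU, hPU]
          rfl
        | succ i ihi =>
          intro hi
          have hi' : i < n := Nat.lt_of_succ_le hi
          rw [iterDerivN_succ, ihi (le_of_lt hi'),
            step_deriv hb0 hgmono (fun j => hSsub i j) (fun j a ha => hE1 (g j) i hi' a ha)]
          simp only [iterDerivN_succ]
      have hlevel : iterDerivN (f' '' Iio (b * ω)) n =
          ⋃ j, ({b * ((g j : ℕ) : Ordinal.{0}) + b} : Set Ordinal.{0}) := by
        rw [hform n le_rfl]
        simp only [hE2, image_empty, empty_union]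
      have hE2' : iterDerivN (f' '' Iio (b * ω)) (n+1) = ∅ := by
        rw [iterDerivN_succ, hlevel, tops_deriv hb0 hgmono]
      have hE1' : ∀ i : ℕ, i < n+1 → ∀ a, a < b * ω →
          ∃ x ∈ iterDerivN (f' '' Iio (b * ω)) i, a < x := by
        intro i hi a ha
        have hi' : i ≤ n := Nat.lt_succ_iff.1 hi
        obtain ⟨m₀, hm₀⟩ := lt_omega0.1 ((Ordinal.div_lt hb0).2 ha)
        have haa : a < b * (((m₀+1:ℕ)) : Ordinal.{0}) := by
          have h1 := Ordinal.lt_mul_succ_div a hb0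
          rwa [hm₀, ← Ordinal.add_one_eq_succ, ← Nat.cast_succ] at h1
        refine ⟨b * ((g (m₀+1) : ℕ) : Ordinal.{0}) + b, ?_, ?_⟩
        · rw [hform i hi', mem_iUnion]
          exact ⟨m₀+1, Or.inr rfl⟩
        · have h1 : ((m₀+1:ℕ) : Ordinal.{0}) ≤ ((g (m₀+1) : ℕ) : Ordinal.{0}) := by
            exact_mod_cast hgmono.le_apply
          calc a < b * (((m₀+1:ℕ)) : Ordinal.{0}) := haa
            _ ≤ b * ((g (m₀+1) : ℕ) : Ordinal.{0}) := mul_le_mul_right h1 _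
            _ ≤ _ := le_self_add
      set d' : ℕ → Fin k := fun i => if h : i < n then v0.1 ⟨i, h⟩ else v0.2 with hd'
      have hF' : ∀ i : ℕ, i < n+1 →
          ∀ x ∈ iterDerivN (f' '' Iio (b * ω)) i \ iterDerivN (f' '' Iio (b * ω)) (i+1),
            c x = d' i := by
        intro i hi x hx
        rcases Nat.lt_succ_iff_lt_or_eq.1 hi with hilt | rfl
        · obtain ⟨hx1, hx2⟩ := hx
          rw [hform i (le_of_lt hilt), mem_iUnion] at hx1
          obtain ⟨j, hx1⟩ := hx1
          have hx2' : x ∉ ⋃ j', ((fun x => b * ((g j' : ℕ) : Ordinal.{0}) + x) ''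
              iterDerivN (X (g j')) (i+1) ∪ {b * ((g j' : ℕ) : Ordinal.{0}) + b}) := by
            rw [← hform (i+1) (Nat.succ_le_of_lt hilt)]
            exact hx2
          rcases hx1 with ⟨u, hu, rfl⟩ | hx1
          · have hu2 : u ∉ iterDerivN (X (g j)) (i+1) := by
              intro hu2
              exact hx2' (mem_iUnion.2 ⟨j, Or.inl (mem_image_of_mem _ hu2)⟩)
            have hc1 := hF (g j) i hilt u ⟨hu, hu2⟩
            rw [hc1]
            simp only [hd', dif_pos hilt]
            exact hgd j ⟨i, hilt⟩
          · exfalso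
            apply hx2'
            rw [mem_iUnion]
            rw [mem_singleton_iff] at hx1
            exact ⟨j, Or.inr hx1⟩
        · obtain ⟨hx1, -⟩ := hx
          rw [hlevel, mem_iUnion] at hx1
          obtain ⟨j, hx1⟩ := hx1
          rw [mem_singleton_iff] at hx1
          subst hx1
          rw [htt j]
          simp [hd']
      refine ⟨f' '' Iio (b * ω), f', d', ?_, ?_, ?_, ?_, ?_, ?_, ?_⟩
      · rw [htarget]
      · rw [htarget]; exact hB'
      · rw [htarget]; exact hC'
      · rw [htarget]; exact hD'
      · rw [htarget]; exact hE1'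
      · exact hE2'
      · exact hF'

end ColourAux

/-- Any finite colouring of `ω^n` is constant on rank classes of a homeomorphic copy of `ω^n`. -/
theorem colouring_constant_on_ranks (k n : ℕ) (hk : 0 < k) (hn : 0 < n)
    (c : Ordinal.{0} → Fin k) :
    ∃ X : Set Ordinal.{0}, X ⊆ Iio (ω ^ (n : Ordinal.{0})) ∧
      Nonempty ((Iio (ω ^ (n : Ordinal.{0})) : Set Ordinal.{0}) ≃ₜ X) ∧
      ∀ i : ℕ, i < n →
        ∀ x ∈ iterDeriv X (i : Ordinal.{0}) \ iterDeriv X ((i : Ordinal.{0}) + 1),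
          ∀ y ∈ iterDeriv X (i : Ordinal.{0}) \ iterDeriv X ((i : Ordinal.{0}) + 1),
            c x = c y := by
  obtain ⟨X, f, d, hA, hB, hC, hD, hE1, hE2, hF⟩ := ColourAux.key k n hn c
  have hα : Order.IsSuccLimit (ω ^ (n : Ordinal.{0})) :=
    isSuccLimit_opow_left isSuccLimit_omega0 (by exact_mod_cast hn.ne')
  have hunb : ∀ a, a < ω ^ (n : Ordinal.{0}) → ∃ b, b < ω ^ (n : Ordinal.{0}) ∧ a < f b := by
    intro a ha
    obtain ⟨x, hx, hax⟩ := hE1 0 hn a ha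
    rw [ColourAux.iterDerivN_zero, hA] at hx
    obtain ⟨β, hβ, rfl⟩ := hx
    exact ⟨β, hβ, hax⟩
  refine ⟨X, fun x hx => (hC hx).2, ?_, ?_⟩
  · exact ColourAux.homeo_of_good _ hα f X hA hB
      (fun β hβ => (hC (show f β ∈ X by rw [hA]; exact mem_image_of_mem f hβ)).2) hunb hD
  · intro i hi x hx y hy
    rw [← Nat.cast_succ, ColourAux.iterDeriv_natCast, ColourAux.iterDeriv_natCast] at hx hy
    rw [hF i hi x hx, hF i hi y hy]

end
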